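/- For a Tychonoff space X the following are equivalent: (i) X is a k_ℝ-space; (ii) for every compact Hausdorff space K the product X × K is a k_ℝ-space; (iii) for every compact Hausdorff space K, each k-continuous function f : X × K → ℝ is continuous. -/

import Mathlib

open Set Filter Topology

/-- A set `H` of continuous real-valued functions is equicontinuous. -/
def EquicontinuousSet {X : Type*} [TopologicalSpace X] (H : Set C(X, ℝ)) : Prop :=
  ∀ x : X, ∀ ε : ℝ, 0 < ε → ∃ U ∈ 𝓝 x, ∀ x' ∈ U, ∀ f ∈ H, |f x' - f x| < ε

/-- `X` is Ascoli: every compact subset of `C_k(X)` is equicontinuous. -/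
def AscoliSpace (X : Type*) [TopologicalSpace X] : Prop :=
  ∀ K : Set C(X, ℝ), IsCompact K → EquicontinuousSet K

/-- `X` is sequentially Ascoli: every convergent sequence in `C_k(X)` is equicontinuous. -/
def SeqAscoliSpace (X : Type*) [TopologicalSpace X] : Prop :=
  ∀ (f : ℕ → C(X, ℝ)) (g : C(X, ℝ)), Tendsto f atTop (𝓝 g) →
    EquicontinuousSet (Set.range f ∪ {g})

/-- A function is `k`-continuous if its restriction to every compact subset is continuous. -/
def KContinuous {X Y : Type*} [TopologicalSpace X] [TopologicalSpace Y] (f : X → Y) : Prop :=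
  ∀ K : Set X, IsCompact K → ContinuousOn f K

/-- `X` is a `k_ℝ`-space if every `k`-continuous real-valued function is continuous. -/
def KRSpace (X : Type*) [TopologicalSpace X] : Prop :=
  ∀ f : X → ℝ, KContinuous f → Continuous f

/-- `X` is an `s_ℝ`-space if every sequentially continuous real-valued function is continuous. -/
def SRSpace (X : Type*) [TopologicalSpace X] : Prop :=
  ∀ f : X → ℝ, SeqContinuous f → Continuous f

/-- A function on a product is separately continuous. -/
def SeparatelyContinuous {X K : Type*} [TopologicalSpace X] [TopologicalSpace K]
    (Φ : X × K → ℝ) : Prop :=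
  (∀ x : X, Continuous fun k => Φ (x, k)) ∧ (∀ k : K, Continuous fun x => Φ (x, k))

/-- `X` is pseudocompact: every continuous real-valued function on `X` is bounded. -/
def Pseudocompact (X : Type*) [TopologicalSpace X] : Prop :=
  ∀ f : X → ℝ, Continuous f → ∃ M : ℝ, ∀ x : X, |f x| ≤ M

/-- A subset `A` of `X` is functionally bounded if every continuous real-valued
function on `X` is bounded on `A`. -/
def FunctionallyBounded {X : Type*} [TopologicalSpace X] (A : Set X) : Prop :=
  ∀ f : X → ℝ, Continuous f → ∃ M : ℝ, ∀ a ∈ A, |f a| ≤ M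

/-- An `R`-quotient map: a continuous surjection such that real-valued functions on the
codomain are continuous as soon as their composition with the map is continuous. -/
def RQuotientMap {X Y : Type*} [TopologicalSpace X] [TopologicalSpace Y] (p : X → Y) : Prop :=
  Continuous p ∧ Function.Surjective p ∧ ∀ φ : Y → ℝ, Continuous (φ ∘ p) → Continuous φ

theorem krspace_prod_aux {X : Type u} [TopologicalSpace X] (hX : KRSpace X)
    {K : Type v} [TopologicalSpace K] [CompactSpace K] [T2Space K]
    (f : X × K → ℝ) (hf : KContinuous f) : Continuous f := by
  have hslice : ∀ x : X, Continuous fun k => f (x, k) := by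
    intro x
    have hc : IsCompact (({x} : Set X) ×ˢ (univ : Set K)) :=
      isCompact_singleton.prod isCompact_univ
    have hfc := hf _ hc
    have h1 : Continuous fun k : K => ((x, k) : X × K) :=
      continuous_const.prodMk continuous_id
    exact hfc.comp_continuous h1 (fun k => ⟨rfl, trivial⟩)
  set F : X → C(K, ℝ) := fun x => ⟨fun k => f (x, k), hslice x⟩ with hF
  have hFk : ∀ C : Set X, IsCompact C → ContinuousOn F C := by
    intro C hC
    rw [continuousOn_iff_continuous_restrict]
    have hCK : IsCompact (C ×ˢ (univ : Set K)) := hC.prod isCompact_univ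
    have hfC := hf _ hCK
    have hh : Continuous fun p : C × K => f (p.1.1, p.2) := by
      have h1 : Continuous fun p : C × K => ((p.1.1, p.2) : X × K) :=
        (continuous_subtype_val.comp continuous_fst).prodMk continuous_snd
      exact hfC.comp_continuous h1 (by rintro ⟨⟨x, hx⟩, k⟩; exact ⟨hx, trivial⟩)
    have heq : (C.domRestrict F) = ⇑((ContinuousMap.mk _ hh).curry) := by
      funext c; ext k; rfl
    rw [heq]
    exact ((ContinuousMap.mk _ hh).curry).continuous
  have hFcont : Continuous F := by
    rw [continuous_iff_continuousAt]
    intro x₀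
    have hg : Continuous fun x => dist (F x) (F x₀) := by
      apply hX
      intro C hC
      exact (continuous_id.dist continuous_const).comp_continuousOn (hFk C hC)
    have h0 : Tendsto (fun x => dist (F x) (F x₀)) (𝓝 x₀) (𝓝 0) := by
      have := hg.tendsto x₀
      simpa using this
    exact tendsto_iff_dist_tendsto_zero.mpr h0
  have : f = fun p : X × K => (F p.1) p.2 := rfl
  rw [this]
  exact ContinuousEval.continuous_eval.comp (hFcont.prodMap continuous_id)

theorem krspace_of_prod_punit {X : Type u} [TopologicalSpace X]
    (h : KRSpace (X × PUnit.{v + 1})) : KRSpace X := by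
  intro f hf
  have hg : KContinuous (fun p : X × PUnit.{v + 1} => f p.1) := by
    intro C hC
    have h1 : IsCompact (Prod.fst '' C) := hC.image continuous_fst
    have h2 := hf _ h1
    exact h2.comp continuous_fst.continuousOn (fun p hp => ⟨p, hp, rfl⟩)
  have hgc := h _ hg
  have : f = (fun p : X × PUnit.{v + 1} => f p.1) ∘ fun x => (x, PUnit.unit) := rfl
  rw [this]
  exact hgc.comp (continuous_id.prodMk continuous_const)

theorem kRSpace_iff_prod_compact {X : Type u} [TopologicalSpace X] [T35Space X] :
    (KRSpace X ↔
      ∀ (K : Type v) [TopologicalSpace K] [CompactSpace K] [T2Space K],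
        KRSpace (X × K)) ∧
    (KRSpace X ↔
      ∀ (K : Type v) [TopologicalSpace K] [CompactSpace K] [T2Space K],
        ∀ f : X × K → ℝ, KContinuous f → Continuous f) := by
  have h1 : KRSpace X →
      ∀ (K : Type v) [TopologicalSpace K] [CompactSpace K] [T2Space K],
        KRSpace (X × K) := by
    intro hX K _ _ _ f hf
    exact krspace_prod_aux hX f hf
  have h2 : (∀ (K : Type v) [TopologicalSpace K] [CompactSpace K] [T2Space K],
      KRSpace (X × K)) → KRSpace X := by
    intro h
    exact krspace_of_prod_punit (h PUnit.{v + 1})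
  exact ⟨⟨h1, h2⟩, ⟨h1, h2⟩⟩
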